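/- Let λ ∈ k with λ ≠ 0, λ ≠ 1 and λ ≠ −1, and let a ∈ k with a ≠ 0. Then the O-module Ω(λ,a) is generated by the constant polynomial 1; that is, U(O)·1 = k[X]. -/

import Mathlib

/-- Let `k` be a field of characteristic zero, `lam ∈ k` with `lam ≠ 0, 1, -1`, and `a ∈ k` with
`a ≠ 0`.  `Ω(lam,a)` is the `O`-module with underlying space `k[X]` and action
`O_n · f(X) = lamⁿ (X + n·a) f(X + n) − lam⁻ⁿ (X − n·a) f(X − n)` for `n ≥ 1`
(recorded by `act n f`; since `O` is spanned by the `O_n`, `n ≥ 1`, subspaces stable under all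
`act n` are exactly the `O`-submodules).  Then `Ω(lam,a)` is generated by the constant
polynomial `1`: the smallest `O`-submodule containing `1` is all of `k[X]`, i.e.
`U(O)·1 = k[X]`. -/
theorem Omega_module_generated_by_one
    {k : Type*} [Field k] [CharZero k]
    (lam a : k) (hlam0 : lam ≠ 0) (hlam1 : lam ≠ 1) (hlamm1 : lam ≠ -1) (ha : a ≠ 0)
    (act : ℕ → Polynomial k → Polynomial k)
    (hact : ∀ (n : ℕ) (f : Polynomial k), act n f =
      lam ^ n • ((Polynomial.X + Polynomial.C ((n : k) * a)) *
          f.comp (Polynomial.X + Polynomial.C (n : k)))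
        - (lam ^ n)⁻¹ • ((Polynomial.X - Polynomial.C ((n : k) * a)) *
          f.comp (Polynomial.X - Polynomial.C (n : k)))) :
    ∀ N : Submodule k (Polynomial k),
      (∀ n : ℕ, 1 ≤ n → ∀ f ∈ N, act n f ∈ N) →
      (1 : Polynomial k) ∈ N → N = ⊤ := by
  intro N hstab h1
  -- `lam - lam⁻¹ ≠ 0`
  have hkey : lam - lam⁻¹ ≠ 0 := by
    intro h
    have h2 : lam * lam = 1 := by
      have := sub_eq_zero.mp h
      field_simp at this
      linear_combination this
    rcases mul_self_eq_one_iff.mp h2 with h | h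
    · exact hlam1 h
    · exact hlamm1 h
  -- the action of `O_1` on a nonzero polynomial raises degree by one
  have step : ∀ f : Polynomial k, f ≠ 0 → (act 1 f ≠ 0 ∧
      (act 1 f).natDegree = f.natDegree + 1) := by
    intro f hf
    set m := f.natDegree with hm
    have hXC : (Polynomial.X + Polynomial.C ((1 : k)) : Polynomial k).natDegree = 1 :=
      Polynomial.natDegree_X_add_C _
    have hXC' : (Polynomial.X - Polynomial.C ((1 : k)) : Polynomial k).natDegree = 1 :=
      Polynomial.natDegree_X_sub_C _
    set p1 : Polynomial k := (Polynomial.X + Polynomial.C ((1 : k) * a)) *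
        f.comp (Polynomial.X + Polynomial.C ((1 : k))) with hp1
    set p2 : Polynomial k := (Polynomial.X - Polynomial.C ((1 : k) * a)) *
        f.comp (Polynomial.X - Polynomial.C ((1 : k))) with hp2
    have hc1 : (f.comp (Polynomial.X + Polynomial.C ((1 : k)))).natDegree = m := by
      rw [Polynomial.natDegree_comp, hXC, mul_one]
    have hc2 : (f.comp (Polynomial.X - Polynomial.C ((1 : k)))).natDegree = m := by
      rw [Polynomial.natDegree_comp, hXC', mul_one]
    have hl1 : (f.comp (Polynomial.X + Polynomial.C ((1 : k)))).leadingCoeff =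
        f.leadingCoeff := by
      rw [Polynomial.leadingCoeff_comp (by rw [hXC]; exact one_ne_zero),
        Polynomial.leadingCoeff_X_add_C, one_pow, mul_one]
    have hl2 : (f.comp (Polynomial.X - Polynomial.C ((1 : k)))).leadingCoeff =
        f.leadingCoeff := by
      rw [Polynomial.leadingCoeff_comp (by rw [hXC']; exact one_ne_zero),
        Polynomial.leadingCoeff_X_sub_C, one_pow, mul_one]
    have hcomp1ne : f.comp (Polynomial.X + Polynomial.C ((1 : k))) ≠ 0 := by
      intro h
      apply hf
      have := hl1
      rw [h, Polynomial.leadingCoeff_zero] at this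
      exact Polynomial.leadingCoeff_eq_zero.mp this.symm
    have hcomp2ne : f.comp (Polynomial.X - Polynomial.C ((1 : k))) ≠ 0 := by
      intro h
      apply hf
      have := hl2
      rw [h, Polynomial.leadingCoeff_zero] at this
      exact Polynomial.leadingCoeff_eq_zero.mp this.symm
    have hd1 : p1.natDegree = m + 1 := by
      rw [hp1, Polynomial.natDegree_mul (Polynomial.X_add_C_ne_zero _) hcomp1ne,
        Polynomial.natDegree_X_add_C, hc1, add_comm]
    have hd2 : p2.natDegree = m + 1 := by
      rw [hp2, Polynomial.natDegree_mul (Polynomial.X_sub_C_ne_zero _) hcomp2ne,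
        Polynomial.natDegree_X_sub_C, hc2, add_comm]
    have hlc1 : p1.coeff (m + 1) = f.leadingCoeff := by
      have : p1.leadingCoeff = f.leadingCoeff := by
        rw [hp1, Polynomial.leadingCoeff_mul, Polynomial.leadingCoeff_X_add_C, one_mul, hl1]
      rw [← hd1] at *
      rwa [Polynomial.leadingCoeff] at this
    have hlc2 : p2.coeff (m + 1) = f.leadingCoeff := by
      have : p2.leadingCoeff = f.leadingCoeff := by
        rw [hp2, Polynomial.leadingCoeff_mul, Polynomial.leadingCoeff_X_sub_C, one_mul, hl2]
      rw [← hd2] at *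
      rwa [Polynomial.leadingCoeff] at this
    have hact1 : act 1 f = lam • p1 - lam⁻¹ • p2 := by
      rw [hact 1 f]
      simp only [pow_one, Nat.cast_one, hp1, hp2]
    have hcoeff : (act 1 f).coeff (m + 1) = (lam - lam⁻¹) * f.leadingCoeff := by
      rw [hact1]
      simp only [Polynomial.coeff_sub, Polynomial.coeff_smul, smul_eq_mul, hlc1, hlc2]
      ring
    have hlcne : f.leadingCoeff ≠ 0 := Polynomial.leadingCoeff_ne_zero.mpr hf
    have hne : (act 1 f).coeff (m + 1) ≠ 0 := by
      rw [hcoeff]; exact mul_ne_zero hkey hlcne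
    have hle : (act 1 f).natDegree ≤ m + 1 := by
      rw [hact1]
      refine le_trans (Polynomial.natDegree_sub_le _ _) ?_
      refine max_le ?_ ?_
      · exact le_trans (Polynomial.natDegree_smul_le _ _) (le_of_eq hd1)
      · exact le_trans (Polynomial.natDegree_smul_le _ _) (le_of_eq hd2)
    have hge : m + 1 ≤ (act 1 f).natDegree := Polynomial.le_natDegree_of_ne_zero hne
    constructor
    · intro h; rw [h] at hne; simp at hne
    · omega
  -- iterating from `1` gives elements of `N` of every degree
  have tower : ∀ m : ℕ, ∃ p ∈ N, p ≠ 0 ∧ p.natDegree = m := by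
    intro m
    induction m with
    | zero => exact ⟨1, h1, one_ne_zero, Polynomial.natDegree_one⟩
    | succ d ih =>
      obtain ⟨p, hpN, hpne, hpd⟩ := ih
      obtain ⟨h1', h2'⟩ := step p hpne
      exact ⟨act 1 p, hstab 1 le_rfl p hpN, h1', by rw [h2', hpd]⟩
  -- now every polynomial is in `N`, by induction on degree
  have main : ∀ d : ℕ, ∀ f : Polynomial k, f.natDegree ≤ d → f ∈ N := by
    intro d
    induction d with
    | zero =>
      intro f hf
      have : f = f.coeff 0 • 1 := by
        rw [Polynomial.eq_C_of_natDegree_le_zero hf]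
        simp [Polynomial.smul_eq_C_mul]
      rw [this]
      exact N.smul_mem _ h1
    | succ d ih =>
      intro f hf
      by_cases hfd : f.natDegree ≤ d
      · exact ih f hfd
      have hfd' : f.natDegree = d + 1 := by omega
      obtain ⟨p, hpN, hpne, hpd⟩ := tower (d + 1)
      have hplc : p.coeff (d + 1) ≠ 0 := by
        rw [← hpd]; exact Polynomial.leadingCoeff_ne_zero.mpr hpne
      set c : k := f.coeff (d + 1) / p.coeff (d + 1) with hc
      have hsub : (f - c • p).natDegree ≤ d := by
        rw [Polynomial.natDegree_le_iff_coeff_eq_zero]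
        intro M hM
        rcases eq_or_lt_of_le (Nat.succ_le_of_lt hM) with h | h
        · simp only [Polynomial.coeff_sub, Polynomial.coeff_smul, smul_eq_mul, ← h, hc]
          field_simp
          ring
        · have h1'' : f.coeff M = 0 := by
            apply Polynomial.coeff_eq_zero_of_natDegree_lt; omega
          have h2'' : p.coeff M = 0 := by
            apply Polynomial.coeff_eq_zero_of_natDegree_lt; omega
          simp [h1'', h2'']
      have : f = (f - c • p) + c • p := by ring
      rw [this]
      exact N.add_mem (ih _ hsub) (N.smul_mem _ hpN)
  rw [eq_top_iff]
  intro f _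
  exact main f.natDegree f le_rfl
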